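/- Let G be a connected bipartite graph with at least two vertices such that the binomial edge ideal J_G is unmixed, equivalently c_G(S) = |S| + 1 for every cut set S of G. Then G has exactly 2 leaves (vertices of degree one). -/

import Mathlib

open SimpleGraph Finset

/-- Number of connected components of the subgraph of `G` induced on the complement of `S`. -/
noncomputable def numComp {V : Type*} [Fintype V] (G : SimpleGraph V) (S : Finset V) : ℕ :=
  Nat.card (G.induce ((↑S : Set V)ᶜ)).ConnectedComponent

/-- `S` is a cut set of `G`. -/
def IsCutSet {V : Type*} [Fintype V] [DecidableEq V] (G : SimpleGraph V) (S : Finset V) : Prop :=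
  S = ∅ ∨ (S ≠ ∅ ∧ ∀ i ∈ S, numComp G (S.erase i) < numComp G S)

/-- The combinatorial condition equivalent to unmixedness of the binomial edge ideal. -/
def Unmixed {V : Type*} [Fintype V] [DecidableEq V] (G : SimpleGraph V) : Prop :=
  ∀ S : Finset V, IsCutSet G S → numComp G S = S.card + 1

section Aux

variable {V : Type*} [Fintype V] [DecidableEq V] (G : SimpleGraph V)

private lemma aux_reach (B T : Finset V) (g : V → V)
    (hgB : ∀ x, g x ∈ B) (hgid : ∀ x ∈ B, g x = x)
    (hadj : ∀ x, x ∉ B → G.Adj x (g x))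
    (hBT : ∀ b ∈ B, b ∉ T) :
    ∀ x : ↥((↑T : Set V)ᶜ), (G.induce ((↑T : Set V)ᶜ)).Reachable x
      ⟨g x, by simpa using hBT _ (hgB (x : V))⟩ := by
  intro x
  by_cases hxB : (x : V) ∈ B
  · have hx : (⟨g x, by simpa using hBT _ (hgB (x : V))⟩ : ↥((↑T : Set V)ᶜ)) = x :=
      Subtype.ext (hgid _ hxB)
    rw [hx]
  · exact (by simpa using hadj (x : V) hxB :
      (G.induce ((↑T : Set V)ᶜ)).Adj x ⟨g x, by simpa using hBT _ (hgB (x : V))⟩).reachable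

private lemma aux_surj (B T : Finset V) (g : V → V)
    (hgB : ∀ x, g x ∈ B) (hgid : ∀ x ∈ B, g x = x)
    (hadj : ∀ x, x ∉ B → G.Adj x (g x))
    (hBT : ∀ b ∈ B, b ∉ T) :
    Function.Surjective (fun b : ↥(↑B : Set V) =>
      (G.induce ((↑T : Set V)ᶜ)).connectedComponentMk
        ⟨(b : V), by simpa using hBT _ (by simpa using b.2)⟩) := by
  intro c
  obtain ⟨x, rfl⟩ := c.exists_rep
  refine ⟨⟨g x, by simpa using hgB (x : V)⟩, ?_⟩
  exact (ConnectedComponent.sound (aux_reach G B T g hgB hgid hadj hBT x)).symm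

/-- If every remaining vertex is in `B` or adjacent (via `g`) to a vertex of `B`, and `g` is
constant on edges of the induced graph, then the number of components is `B.card`. -/
private lemma compCount (B T : Finset V) (g : V → V)
    (hgB : ∀ x, g x ∈ B) (hgid : ∀ x ∈ B, g x = x)
    (hadj : ∀ x, x ∉ B → G.Adj x (g x))
    (hBT : ∀ b ∈ B, b ∉ T)
    (hinv : ∀ x y, x ∉ T → y ∉ T → G.Adj x y → g x = g y) :
    numComp G T = B.card := by
  set W : Set V := (↑T : Set V)ᶜ with hW
  have hmemW : ∀ x : ↥W, (x : V) ∉ T := fun x hxT => x.2 (Finset.mem_coe.mpr hxT)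
  set ψ : ↥(↑B : Set V) → (G.induce W).ConnectedComponent := fun b =>
    (G.induce W).connectedComponentMk ⟨(b : V), by simpa [hW] using hBT _ (by simpa using b.2)⟩
    with hψ
  have hsurj : Function.Surjective ψ := aux_surj G B T g hgB hgid hadj hBT
  have gconst : ∀ (u v : ↥W), (G.induce W).Walk u v → g u = g v := by
    intro u v p
    induction p with
    | nil => rfl
    | @cons u w v h p ih =>
      exact (hinv _ _ (hmemW u) (hmemW w) (by simpa using h)).trans ih
  have hinj : Function.Injective ψ := by
    intro b1 b2 h
    have hr : (G.induce W).Reachable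
        ⟨(b1 : V), by simpa [hW] using hBT _ (by simpa using b1.2)⟩
        ⟨(b2 : V), by simpa [hW] using hBT _ (by simpa using b2.2)⟩ :=
      (SimpleGraph.ConnectedComponent.eq).mp h
    obtain ⟨p⟩ := hr
    have hg : g b1 = g b2 := gconst _ _ p
    have hb1 : (b1 : V) ∈ B := by simpa using b1.2
    have hb2 : (b2 : V) ∈ B := by simpa using b2.2
    exact Subtype.ext (by rw [← hgid _ hb1, ← hgid _ hb2, hg])
  have := Nat.card_eq_of_bijective ψ ⟨hinj, hsurj⟩
  rw [numComp, ← this]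
  simp [Nat.card_eq_fintype_card]

private lemma compLess (B T : Finset V) (g : V → V)
    (hgB : ∀ x, g x ∈ B) (hgid : ∀ x ∈ B, g x = x)
    (hadj : ∀ x, x ∉ B → G.Adj x (g x))
    (hBT : ∀ b ∈ B, b ∉ T)
    (i a b : V) (hi : i ∉ T) (haB : a ∈ B) (hbB : b ∈ B) (hab : a ≠ b)
    (hia : G.Adj i a) (hib : G.Adj i b) :
    numComp G T < B.card := by
  set W : Set V := (↑T : Set V)ᶜ with hW
  set ψ : ↥(↑B : Set V) → (G.induce W).ConnectedComponent := fun b =>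
    (G.induce W).connectedComponentMk ⟨(b : V), by simpa [hW] using hBT _ (by simpa using b.2)⟩
    with hψ
  have hsurj : Function.Surjective ψ := aux_surj G B T g hgB hgid hadj hBT
  have hcardB : Nat.card ↥(↑B : Set V) = B.card := by simp [Nat.card_eq_fintype_card]
  have hle : Nat.card (G.induce W).ConnectedComponent ≤ B.card := by
    rw [← hcardB]; exact Nat.card_le_card_of_surjective ψ hsurj
  rcases lt_or_eq_of_le hle with h | h
  · exact h
  · exfalso
    have hbij : Function.Bijective ψ :=
      (Nat.bijective_iff_surjective_and_card ψ).mpr ⟨hsurj, by rw [hcardB, h]⟩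
    have hiW : i ∈ W := by simpa [hW] using hi
    have haW : (a : V) ∈ W := by simpa [hW] using hBT _ haB
    have hbW : (b : V) ∈ W := by simpa [hW] using hBT _ hbB
    have hr : (G.induce W).Reachable ⟨a, haW⟩ ⟨b, hbW⟩ :=
      ((by simpa using hia.symm : (G.induce W).Adj ⟨a, haW⟩ ⟨i, hiW⟩).reachable).trans
        (by simpa using hib : (G.induce W).Adj ⟨i, hiW⟩ ⟨b, hbW⟩).reachable
    have : (⟨a, by simpa using haB⟩ : ↥(↑B : Set V)) = ⟨b, by simpa using hbB⟩ :=
      hbij.injective (ConnectedComponent.sound hr)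
    exact hab (by simpa using this)

/-- Main counting argument: for a bipartition `A ⊔ B`, unmixedness forces
`|B| = |{non-leaves of A}| + 1`. -/
private lemma key [DecidableRel G.Adj]
    (hnbr : ∀ x : V, ∃ y, G.Adj x y)
    (A B : Finset V) (hdisj : Disjoint A B) (hcover : A ∪ B = Finset.univ)
    (hbip : ∀ a b, G.Adj a b → (a ∈ A ∧ b ∈ B) ∨ (a ∈ B ∧ b ∈ A))
    (hunmixed : Unmixed G) :
    B.card = (A.filter fun w => G.degree w ≠ 1).card + 1 := by
  classical
  set S : Finset V := A.filter (fun w => G.degree w ≠ 1) with hS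
  have hAB : ∀ x : V, x ∉ B → x ∈ A := by
    intro x hx
    have : x ∈ A ∪ B := by rw [hcover]; exact mem_univ x
    rcases mem_union.mp this with h | h
    · exact h
    · exact absurd h hx
  have hadjAB : ∀ {a b : V}, G.Adj a b → a ∈ A → b ∈ B := by
    intro a b h ha
    rcases hbip _ _ h with ⟨_, hb⟩ | ⟨hb, _⟩
    · exact hb
    · exact absurd hb (Finset.disjoint_left.mp hdisj ha)
  set g : V → V := fun x => if h : x ∈ B then x else (hnbr x).choose with hg
  have hgid : ∀ x ∈ B, g x = x := fun x hx => dif_pos hx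
  have hgadj : ∀ x, x ∉ B → G.Adj x (g x) := by
    intro x hx
    rw [hg]
    simpa [dif_neg hx] using (hnbr x).choose_spec
  have hgB : ∀ x, g x ∈ B := by
    intro x
    by_cases hx : x ∈ B
    · rwa [hgid _ hx]
    · exact hadjAB (hgadj x hx) (hAB x hx)
  have hBS : ∀ b ∈ B, b ∉ S := by
    intro b hb hbS
    exact Finset.disjoint_left.mp hdisj (mem_filter.mp hbS).1 hb
  have huniq : ∀ x c d, G.degree x = 1 → G.Adj x c → G.Adj x d → c = d := by
    intro x c d hd hc hd'
    exact Finset.card_le_one.mp (le_of_eq hd) c ((G.mem_neighborFinset _ _).mpr hc)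
      d ((G.mem_neighborFinset _ _).mpr hd')
  have hinv : ∀ x y, x ∉ S → y ∉ S → G.Adj x y → g x = g y := by
    intro x y hx hy hxy
    by_cases hxB : x ∈ B <;> by_cases hyB : y ∈ B
    · rcases hbip _ _ hxy with ⟨ha, _⟩ | ⟨_, ha⟩
      · exact absurd hxB (Finset.disjoint_left.mp hdisj ha)
      · exact absurd hyB (Finset.disjoint_left.mp hdisj ha)
    · -- x ∈ B, y ∉ B : y is a leaf in A whose unique neighbor is x
      have hyA : y ∈ A := hAB y hyB
      have hdy : G.degree y = 1 := by
        by_contra hne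
        exact hy (mem_filter.mpr ⟨hyA, hne⟩)
      have := huniq y (g y) x hdy (hgadj y hyB) hxy.symm
      rw [this, hgid _ hxB]
    · have hxA : x ∈ A := hAB x hxB
      have hdx : G.degree x = 1 := by
        by_contra hne
        exact hx (mem_filter.mpr ⟨hxA, hne⟩)
      have := huniq x (g x) y hdx (hgadj x hxB) hxy
      rw [this, hgid _ hyB]
    · rcases hbip _ _ hxy with ⟨_, hb⟩ | ⟨hb, _⟩
      · exact absurd hb hyB
      · exact absurd hb hxB
  have hA : numComp G S = B.card := compCount G B S g hgB hgid hgadj hBS hinv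
  have hcut : IsCutSet G S := by
    by_cases hSe : S = ∅
    · exact Or.inl hSe
    · refine Or.inr ⟨hSe, fun i hi => ?_⟩
      rw [hA]
      obtain ⟨hiA, hdi⟩ := mem_filter.mp hi
      have hdeg : 1 < G.degree i := by
        obtain ⟨y, hy⟩ := hnbr i
        have : 0 < G.degree i := by
          rw [degree]
          exact Finset.card_pos.mpr ⟨y, (G.mem_neighborFinset _ _).mpr hy⟩
        omega
      obtain ⟨a, ha, b, hb, hab⟩ := Finset.one_lt_card.mp hdeg
      have hia : G.Adj i a := (G.mem_neighborFinset _ _).mp ha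
      have hib : G.Adj i b := (G.mem_neighborFinset _ _).mp hb
      exact compLess G B (S.erase i) g hgB hgid hgadj
        (fun c hc hce => hBS c hc (mem_of_mem_erase hce))
        i a b (notMem_erase i S) (hadjAB hia hiA) (hadjAB hib hiA) hab hia hib
  have := hunmixed S hcut
  rw [hA] at this
  exact this

end Aux

theorem stmt1 {V : Type*} [Fintype V] [DecidableEq V] (G : SimpleGraph V)
    [DecidableRel G.Adj] (hconn : G.Connected)
    (V1 V2 : Finset V) (hdisj : Disjoint V1 V2) (hcover : V1 ∪ V2 = Finset.univ)
    (hne1 : V1.Nonempty) (hne2 : V2.Nonempty)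
    (hbip : ∀ a b, G.Adj a b → (a ∈ V1 ∧ b ∈ V2) ∨ (a ∈ V2 ∧ b ∈ V1))
    (hunmixed : Unmixed G) :
    (Finset.univ.filter (fun w => G.degree w = 1)).card = 2 := by
  classical
  have hnbr : ∀ x : V, ∃ y, G.Adj x y := by
    intro x
    obtain ⟨a, ha⟩ := hne1
    obtain ⟨b, hb⟩ := hne2
    have hab : a ≠ b := fun h => Finset.disjoint_left.mp hdisj ha (h ▸ hb)
    have hz : ∃ z, z ≠ x := by
      by_cases h : a = x
      · exact ⟨b, fun hh => hab (h.trans hh.symm)⟩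
      · exact ⟨a, h⟩
    obtain ⟨z, hzx⟩ := hz
    obtain ⟨p⟩ := hconn.preconnected x z
    cases p with
    | nil => exact absurd rfl hzx
    | cons h _ => exact ⟨_, h⟩
  have e1 : V2.card = (V1.filter fun w => G.degree w ≠ 1).card + 1 :=
    key G hnbr V1 V2 hdisj hcover hbip hunmixed
  have e2 : V1.card = (V2.filter fun w => G.degree w ≠ 1).card + 1 :=
    key G hnbr V2 V1 hdisj.symm (by rw [Finset.union_comm]; exact hcover)
      (fun a b h => (hbip a b h).symm) hunmixed
  have s1 : (V1.filter fun w => G.degree w = 1).card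
      + (V1.filter fun w => G.degree w ≠ 1).card = V1.card := by
    simpa using Finset.card_filter_add_card_filter_not
      (s := V1) (p := fun w => G.degree w = 1)
  have s2 : (V2.filter fun w => G.degree w = 1).card
      + (V2.filter fun w => G.degree w ≠ 1).card = V2.card := by
    simpa using Finset.card_filter_add_card_filter_not
      (s := V2) (p := fun w => G.degree w = 1)
  have hsplit : (Finset.univ.filter (fun w => G.degree w = 1)).card
      = (V1.filter fun w => G.degree w = 1).card + (V2.filter fun w => G.degree w = 1).card := by
    rw [← hcover, Finset.filter_union,
      Finset.card_union_of_disjoint (Finset.disjoint_filter_filter hdisj)]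
  omega
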